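/- Assume n ≥ 2, M_{{1}} ≤ M_{{2}}, min_{x∈Δ_m} u^L(x,2) < M_{{1}}, and M_{{1}} > M_{[n]}. If M_{{1,2}} = M_{[n]}, then there exists x* ∈ Δ_m such that u^L(x*,1) = u^L(x*,2) = M_{{1,2}} = M_{[n]} (so J = {1,2} and x* satisfy u^L(x*,j) = M_J = M_{[n]} for all j ∈ J). -/

import Mathlib

open scoped Classical
open Finset

noncomputable section

/-- The leader's mixed-strategy simplex Δ_m. -/
def simplex (m : ℕ) : Set (Fin m → ℝ) := stdSimplex ℝ (Fin m)

/-- Linear extension of a payoff matrix to mixed strategies: u(x,j) = ∑ i, x i * u i j. -/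
def pay {m n : ℕ} (u : Fin m → Fin n → ℝ) (x : Fin m → ℝ) (j : Fin n) : ℝ :=
  ∑ i, x i * u i j

/-- Inner product on ℝ^m. -/
def dot {m : ℕ} (a x : Fin m → ℝ) : ℝ := ∑ i, a i * x i

/-- min_{j ∈ S} u(x, j). -/
def minOnSet {m n : ℕ} (u : Fin m → Fin n → ℝ) (S : Set (Fin n)) (x : Fin m → ℝ) : ℝ :=
  sInf ((fun j => pay u x j) '' S)

/-- The leader's maximin value M_S = max_{x∈Δ_m} min_{j∈S} u(x,j). -/
def Mval {m n : ℕ} (u : Fin m → Fin n → ℝ) (S : Set (Fin n)) : ℝ :=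
  sSup (minOnSet u S '' simplex m)

/-- The set 𝓜_S of maximin strategies. -/
def argMM {m n : ℕ} (u : Fin m → Fin n → ℝ) (S : Set (Fin n)) : Set (Fin m → ℝ) :=
  {x ∈ simplex m | minOnSet u S x = Mval u S}

/-- The follower's best-response set BR(x) = argmax_j uF(x,j). -/
def BR {m n : ℕ} (uF : Fin m → Fin n → ℝ) (x : Fin m → ℝ) : Set (Fin n) :=
  {j | ∀ j', pay uF x j' ≤ pay uF x j}

/-- Strong Stackelberg equilibrium of the game (uL, uF). -/
def SSE {m n : ℕ} (uL uF : Fin m → Fin n → ℝ) (x : Fin m → ℝ) (j : Fin n) : Prop :=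
  x ∈ simplex m ∧ j ∈ BR uF x ∧
    ∀ x' ∈ simplex m, ∀ j' ∈ BR uF x', pay uL x' j' ≤ pay uL x j

/-- (x, j) is inducible with respect to the leader payoff uL. -/
def Inducible {m n : ℕ} (uL : Fin m → Fin n → ℝ) (x : Fin m → ℝ) (j : Fin n) : Prop :=
  ∃ uF : Fin m → Fin n → ℝ, SSE uL uF x j

/-- μ is a (maximin-)cover of S w.r.t. uL: max_{x∈𝓜_S} max_{j∈BR(x)} uL(x,j) < M_S. -/
def IsCover {m n : ℕ} (uL μ : Fin m → Fin n → ℝ) (S : Set (Fin n)) : Prop :=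
  ∀ x ∈ argMM uL S, ∀ j ∈ BR μ x, pay uL x j < Mval uL S

/-- μ is a proper cover of S w.r.t. uL. -/
def IsProperCover {m n : ℕ} (uL μ : Fin m → Fin n → ℝ) (S : Set (Fin n)) : Prop :=
  IsCover uL μ S ∧ ∀ x ∈ simplex m, ∀ j ∈ S, j ∉ BR μ x

lemma pay_cont {m n : ℕ} (u : Fin m → Fin n → ℝ) (j : Fin n) :
    Continuous fun x : Fin m → ℝ => pay u x j := by
  unfold pay
  exact continuous_finset_sum _ fun i _ => (continuous_apply i).mul continuous_const

lemma simplex_ne {m : ℕ} (hm : 0 < m) : (simplex m).Nonempty :=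
  ⟨_, ite_eq_mem_stdSimplex (𝕜 := ℝ) (⟨0, hm⟩ : Fin m)⟩

lemma minOn_single {m n : ℕ} (u : Fin m → Fin n → ℝ) (j : Fin n) (x : Fin m → ℝ) :
    minOnSet u {j} x = pay u x j := by
  unfold minOnSet; rw [Set.image_singleton, csInf_singleton]

lemma minOn_pair {m n : ℕ} (u : Fin m → Fin n → ℝ) (j1 j2 : Fin n) (x : Fin m → ℝ) :
    minOnSet u {j1, j2} x = min (pay u x j1) (pay u x j2) := by
  unfold minOnSet; rw [Set.image_pair, csInf_pair]

lemma pay_comb {m n : ℕ} (u : Fin m → Fin n → ℝ) (a b : Fin m → ℝ) (s t : ℝ) (j : Fin n) :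
    pay u (s • a + t • b) j = s * pay u a j + t * pay u b j := by
  unfold pay
  rw [Finset.mul_sum, Finset.mul_sum, ← Finset.sum_add_distrib]
  refine Finset.sum_congr rfl fun i _ => ?_
  simp [mul_add, add_mul, mul_assoc]

/-- Attainment of Mval on the simplex, given minOn equals a continuous function. -/
lemma Mval_attained {m n : ℕ} (hm : 0 < m) (u : Fin m → Fin n → ℝ) (S : Set (Fin n))
    (f : (Fin m → ℝ) → ℝ) (hf : Continuous f) (hfS : ∀ x, minOnSet u S x = f x) :
    ∃ x ∈ simplex m, f x = Mval u S ∧ ∀ y ∈ simplex m, f y ≤ f x := by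
  obtain ⟨x, hx, hmax'⟩ := (isCompact_stdSimplex ℝ (Fin m)).exists_isMaxOn
    (simplex_ne hm) hf.continuousOn
  have hmax : ∀ y ∈ simplex m, f y ≤ f x := fun y hy => hmax' hy
  refine ⟨x, hx, ?_, hmax⟩
  have : Mval u S = sSup (f '' simplex m) := by
    unfold Mval; congr 1; ext y; simp [hfS]
  rw [this]
  symm
  apply IsGreatest.csSup_eq
  constructor
  · exact ⟨x, hx, rfl⟩
  · rintro _ ⟨y, hy, rfl⟩
    exact hmax y hy

lemma key {m n : ℕ} (u : Fin m → Fin n → ℝ) (ja jb : Fin n) (M : ℝ)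
    (hub : ∀ x ∈ simplex m, min (pay u x ja) (pay u x jb) ≤ M)
    (a : Fin m → ℝ) (ha : a ∈ simplex m) (ha1 : pay u a ja = M) (ha2 : M ≤ pay u a jb)
    (b : Fin m → ℝ) (hb : b ∈ simplex m) (hb1 : M < pay u b ja) :
    ∃ x ∈ simplex m, pay u x ja = M ∧ pay u x jb = M := by
  rcases eq_or_lt_of_le ha2 with h | h
  · exact ⟨a, ha, ha1, h.symm⟩
  have hbb : pay u b jb ≤ M := by
    have hh := hub b hb
    rcases le_total (pay u b ja) (pay u b jb) with hle | hle
    · rw [min_eq_left hle] at hh; linarith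
    · rwa [min_eq_right hle] at hh
  set c0 : ℝ := pay u a ja - pay u a jb with hc0
  set c1 : ℝ := pay u b ja - pay u b jb with hc1
  have hc0neg : c0 < 0 := by simp [hc0, ha1]; linarith
  have hc1pos : 0 < c1 := by simp [hc1]; linarith
  set t : ℝ := (-c0) / (c1 - c0) with ht
  have hden : 0 < c1 - c0 := by linarith
  have ht0 : 0 < t := div_pos (by linarith) hden
  have ht1 : t < 1 := by
    rw [ht, div_lt_one hden]; linarith
  set x : Fin m → ℝ := (1 - t) • a + t • b with hx
  have hxs : x ∈ simplex m :=
    convex_stdSimplex ℝ (Fin m) ha hb (by linarith) (by linarith) (by ring)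
  have hpa : pay u x ja = (1 - t) * pay u a ja + t * pay u b ja := pay_comb ..
  have hpb : pay u x jb = (1 - t) * pay u a jb + t * pay u b jb := pay_comb ..
  have heq : pay u x ja = pay u x jb := by
    rw [hpa, hpb]
    have : (1 - t) * c0 + t * c1 = 0 := by
      rw [ht]; field_simp; ring
    simp only [hc0, hc1] at this
    linarith
  have hge : M ≤ pay u x ja := by
    rw [hpa]
    have h1 : (1 - t) * M ≤ (1 - t) * pay u a ja := by rw [ha1]
    have h2 : t * M ≤ t * pay u b ja := by nlinarith
    nlinarith
  have hle : pay u x ja ≤ M := by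
    have := hub x hxs
    rw [heq, min_self] at this
    rw [heq]; exact this
  exact ⟨x, hxs, le_antisymm hle hge, heq ▸ le_antisymm hle hge⟩

/-- if M_{1,2} = M_{[n]} (i.e., {1,2} admits no cover), then there is
x* ∈ Δ_m with u^L(x*,1) = u^L(x*,2) = M_{1,2} = M_{[n]}, so J = {1,2} together with x*
satisfies u^L(x*,j) = M_J = M_{[n]} for all j ∈ J. (Actions 1, 2 are j1, j2.) -/
theorem J_xstar_when_no_cover {m n : ℕ} (hm : 0 < m)
    (uL : Fin m → Fin n → ℝ) (j1 j2 : Fin n) (hj : j1 ≠ j2)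
    (hM : Mval uL {j1} ≤ Mval uL {j2})
    (hmin : sInf ((fun x => pay uL x j2) '' simplex m) < Mval uL {j1})
    (hM1 : Mval uL Set.univ < Mval uL {j1})
    (h12 : Mval uL {j1, j2} = Mval uL Set.univ) :
    ∃ xstar ∈ simplex m,
      pay uL xstar j1 = Mval uL {j1, j2} ∧ pay uL xstar j2 = Mval uL {j1, j2} := by
  obtain ⟨xb, hxb, hxbM, hxbmax⟩ := Mval_attained hm uL {j1, j2}
    (fun x => min (pay uL x j1) (pay uL x j2))
    ((pay_cont uL j1).min (pay_cont uL j2)) (minOn_pair uL j1 j2)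
  have hub : ∀ x ∈ simplex m, min (pay uL x j1) (pay uL x j2) ≤ Mval uL {j1, j2} := by
    intro x hx
    rw [← hxbM]
    exact hxbmax x hx
  obtain ⟨x1, hx1, hx1M, _⟩ := Mval_attained hm uL {j1} (fun x => pay uL x j1)
    (pay_cont uL j1) (minOn_single uL j1)
  obtain ⟨x2, hx2, hx2M, _⟩ := Mval_attained hm uL {j2} (fun x => pay uL x j2)
    (pay_cont uL j2) (minOn_single uL j2)
  have hMM1 : Mval uL {j1, j2} < Mval uL {j1} := by rw [h12]; exact hM1
  rcases le_total (pay uL xb j1) (pay uL xb j2) with hcase | hcase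
  · have h1 : pay uL xb j1 = Mval uL {j1, j2} := by rw [← hxbM, min_eq_left hcase]
    have h2 : Mval uL {j1, j2} ≤ pay uL xb j2 := by rw [← h1]; exact hcase
    have hb1 : Mval uL {j1, j2} < pay uL x1 j1 := by rw [hx1M]; exact hMM1
    exact key uL j1 j2 _ hub xb hxb h1 h2 x1 hx1 hb1
  · have h1 : pay uL xb j2 = Mval uL {j1, j2} := by rw [← hxbM, min_eq_right hcase]
    have h2 : Mval uL {j1, j2} ≤ pay uL xb j1 := by rw [← h1]; exact hcase
    have hb1 : Mval uL {j1, j2} < pay uL x2 j2 := by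
      rw [hx2M]; exact lt_of_lt_of_le hMM1 hM
    have hub' : ∀ x ∈ simplex m, min (pay uL x j2) (pay uL x j1) ≤ Mval uL {j1, j2} := by
      intro x hx
      rw [min_comm]
      exact hub x hx
    obtain ⟨x, hxs, ha, hb⟩ := key uL j2 j1 _ hub' xb hxb h1 h2 x2 hx2 hb1
    exact ⟨x, hxs, hb, ha⟩
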